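/- arXiv:1203.2090 — 2 statements merged into one kernel-verified Lean document; each statement's English description precedes it below -/
import Mathlib

section
/- Let A be the set {(0,0)} ∪ {(⌊φn⌋+1, ⌊φ²n⌋+1) : n ≥ 0} ⊆ ℕ × ℕ (with pairs considered unordered). Then from every position (a,b) ∉ A with a ≤ b, there exists a legal F-Wythoff move to a position in A. -/
noncomputable def phi : ℝ := (1 + Real.sqrt 5) / 2

noncomputable def fl (n : ℕ) : ℕ := ⌊phi * n⌋₊

noncomputable def fl2 (n : ℕ) : ℕ := ⌊phi ^ 2 * n⌋₊

def FMove (p q : ℕ × ℕ) : Prop :=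
  ∃ a b x y : ℕ, a ≤ b ∧ x ≤ y ∧ (p = (a, b) ∨ p = (b, a)) ∧ (q = (x, y) ∨ q = (y, x)) ∧
    ((x = a ∧ y < b) ∨ (x < a ∧ y = b) ∨ (x < a ∧ y = a) ∨
      (∃ k, 1 ≤ k ∧ k < a ∧ (b - k) / (a - k) = b / a ∧ x = a - k ∧ y = b - k))

theorem fMove_lt {p q : ℕ × ℕ} (h : FMove p q) : q.1 + q.2 < p.1 + p.2 := by
  obtain ⟨a, b, x, y, hab, hxy, hp, hq, hc⟩ := h
  have hps : p.1 + p.2 = a + b := by rcases hp with h | h <;> subst h <;> simp <;> omega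
  have hqs : q.1 + q.2 = x + y := by rcases hq with h | h <;> subst h <;> simp <;> omega
  rw [hps, hqs]
  rcases hc with ⟨h1, h2⟩ | ⟨h1, h2⟩ | ⟨h1, h2⟩ | ⟨k, hk1, hk2, _, h1, h2⟩ <;> omega

def PPos (p : ℕ × ℕ) : Prop := ∀ q, FMove p q → ¬ PPos q
termination_by p.1 + p.2
decreasing_by exact fMove_lt (by assumption)

noncomputable def grundy (p : ℕ × ℕ) : ℕ :=
  sInf {g : ℕ | ∀ q, FMove p q → grundy q ≠ g}
termination_by p.1 + p.2
decreasing_by exact fMove_lt (by assumption)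

lemma sqrt5_lt : 2 < Real.sqrt 5 := by
  nlinarith [Real.sq_sqrt (by norm_num : (5:ℝ) ≥ 0), Real.sqrt_nonneg 5]

lemma one_lt_phi : 1 < phi := by unfold phi; nlinarith [sqrt5_lt]

lemma phi_pos : 0 < phi := lt_trans one_pos one_lt_phi

lemma phi_sq : phi ^ 2 = phi + 1 := by
  unfold phi
  have := Real.sq_sqrt (by norm_num : (5:ℝ) ≥ 0)
  ring_nf
  nlinarith [this]

lemma phi_irr : Irrational phi := by
  have h5 : Irrational (Real.sqrt 5) := (by norm_num : Nat.Prime 5).irrational_sqrt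
  have h1 : Irrational ((1:ℚ) + Real.sqrt 5) := h5.ratCast_add (q := 1)
  have h2 : Irrational (((1:ℚ) + Real.sqrt 5) / (2:ℚ)) := h1.div_ratCast (by norm_num)
  unfold phi
  simpa using h2

lemma fl2_eq (n : ℕ) : fl2 n = fl n + n := by
  unfold fl2 fl
  have h : phi ^ 2 * n = phi * n + n := by rw [phi_sq]; ring
  rw [h, Nat.floor_add_natCast (mul_nonneg phi_pos.le (Nat.cast_nonneg n))]

lemma fl_ge (n : ℕ) : n ≤ fl n := by
  unfold fl
  apply Nat.le_floor
  nlinarith [one_lt_phi, Nat.cast_nonneg (α := ℝ) n]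

lemma fl_lt_fl {n m : ℕ} (h : n < m) : fl n < fl m := by
  unfold fl
  have h1 : (fl n : ℝ) ≤ phi * n := Nat.floor_le (mul_nonneg phi_pos.le (Nat.cast_nonneg n))
  have h2 : ((n:ℝ) + 1) ≤ m := by exact_mod_cast h
  have : ((fl n + 1 : ℕ) : ℝ) ≤ phi * m := by
    push_cast
    nlinarith [one_lt_phi]
  exact Nat.lt_of_lt_of_le (Nat.lt_succ_self _) (Nat.le_floor this)

lemma fl_zero : fl 0 = 0 := by simp [fl]

lemma fl2_zero : fl2 0 = 0 := by simp [fl2]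

lemma beatty_cover (m : ℕ) (hm : 1 ≤ m) : ∃ n : ℕ, 1 ≤ n ∧ (m = fl n ∨ m = fl2 n) := by
  have hconj : phi.HolderConjugate (phi ^ 2) := by
    refine Real.holderConjugate_iff.mpr ⟨one_lt_phi, ?_⟩
    have hp := phi_pos
    have hs := phi_sq
    field_simp
    nlinarith [hs]
  have hsym := Irrational.beattySeq_symmDiff_beattySeq_pos hconj phi_irr
  have hmem : (m : ℤ) ∈ {n : ℤ | 0 < n} := by simp; omega
  rw [← hsym, Set.mem_symmDiff] at hmem
  have hun : (∃ k > 0, beattySeq phi k = (m:ℤ)) ∨ (∃ k > 0, beattySeq (phi^2) k = (m:ℤ)) := by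
    tauto
  rcases hun with ⟨k, hk, hbk⟩ | ⟨k, hk, hbk⟩
  · refine ⟨k.toNat, by omega, Or.inl ?_⟩
    unfold beattySeq at hbk
    have h1 : phi * ((k.toNat : ℕ) : ℝ) = (k:ℝ) * phi := by
      rw [mul_comm]
      congr 1
      exact_mod_cast Int.toNat_of_nonneg hk.le
    have h2 : (fl k.toNat : ℤ) = ⌊(k:ℝ) * phi⌋ := by
      unfold fl
      rw [← h1]
      rw [← Int.floor_toNat (phi * ((k.toNat : ℕ):ℝ))]
      exact (Int.toNat_of_nonneg (Int.floor_nonneg.mpr (mul_nonneg phi_pos.le (Nat.cast_nonneg _))))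
    omega
  · refine ⟨k.toNat, by omega, Or.inr ?_⟩
    unfold beattySeq at hbk
    have h1 : phi ^ 2 * ((k.toNat : ℕ) : ℝ) = (k:ℝ) * phi ^ 2 := by
      rw [mul_comm]
      congr 1
      exact_mod_cast Int.toNat_of_nonneg hk.le
    have h2 : (fl2 k.toNat : ℤ) = ⌊(k:ℝ) * phi ^ 2⌋ := by
      unfold fl2
      rw [← h1]
      rw [← Int.floor_toNat (phi ^ 2 * ((k.toNat : ℕ):ℝ))]
      exact (Int.toNat_of_nonneg (Int.floor_nonneg.mpr (mul_nonneg (pow_nonneg phi_pos.le 2) (Nat.cast_nonneg _))))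
    omega

theorem stmt10 (a b : ℕ) (hab : a ≤ b)
    (h : (a, b) ∉ {p : ℕ × ℕ | p = (0, 0) ∨ ∃ n : ℕ, p = (fl n + 1, fl2 n + 1) ∨ p = (fl2 n + 1, fl n + 1)}) :
    ∃ q ∈ {p : ℕ × ℕ | p = (0, 0) ∨ ∃ n : ℕ, p = (fl n + 1, fl2 n + 1) ∨ p = (fl2 n + 1, fl n + 1)}, FMove (a, b) q := by
  simp only [Set.mem_setOf_eq, not_or, not_exists, Prod.mk.injEq] at h
  push_neg at h
  obtain ⟨h0, hA⟩ := h
  by_cases ha : a = 0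
  · subst ha
    have hb : b ≠ 0 := by simpa using h0
    exact ⟨(0, 0), Or.inl rfl, 0, b, 0, 0, Nat.zero_le _, le_refl _, Or.inl rfl, Or.inl rfl,
      Or.inl ⟨rfl, by omega⟩⟩
  · have ha1 : 1 ≤ a := by omega
    set d := b - a with hdd
    have hb : b = a + d := by omega
    have hfge := fl_ge d
    have hf2 := fl2_eq d
    rcases lt_trichotomy a (fl d + 1) with hlt | heq | hgt
    · -- a ≤ fl d
      by_cases ha2 : a = 1
      · -- move to (1,1)
        have hd1 : 1 ≤ d := by
          by_contra hd0
          have : d = 0 := by omega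
          rw [this, fl_zero] at hlt; omega
        refine ⟨(1, 1), Or.inr ⟨0, Or.inl (by rw [fl_zero, fl2_zero])⟩,
          a, b, 1, 1, hab, le_refl _, Or.inl rfl, Or.inl rfl, Or.inl ⟨ha2.symm, by omega⟩⟩
      · obtain ⟨n, hn1, hc⟩ := beatty_cover (a - 1) (by omega)
        have hfn2 := fl2_eq n
        rcases hc with hc | hc
        · -- a = fl n + 1, move to (fl n + 1, fl2 n + 1) by lowering b
          have hnd : n < d := by
            by_contra hge
            have : fl d ≤ fl n := by
              rcases Nat.lt_or_ge d n with h' | h'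
              · exact (fl_lt_fl h').le
              · have : d = n := by omega
                rw [this]
            omega
          refine ⟨(fl n + 1, fl2 n + 1), Or.inr ⟨n, Or.inl rfl⟩,
            a, b, fl n + 1, fl2 n + 1, hab, by omega, Or.inl rfl, Or.inl rfl,
            Or.inl ⟨by omega, by omega⟩⟩
        · -- a = fl2 n + 1, move lowering b to fl n + 1, giving pair (fl n + 1, a)
          refine ⟨(fl n + 1, fl2 n + 1), Or.inr ⟨n, Or.inl rfl⟩,
            a, b, fl n + 1, a, hab, by omega, Or.inl rfl, ?_, 
            Or.inr (Or.inr (Or.inl ⟨by omega, rfl⟩))⟩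
          left
          rw [Prod.mk.injEq]
          omega
    · -- contradiction: (a,b) = (fl d + 1, fl2 d + 1)
      exact absurd (by omega : b = fl2 d + 1) ((hA d).1 heq)
    · -- diagonal move with k = a - (fl d + 1)
      refine ⟨(fl d + 1, fl2 d + 1), Or.inr ⟨d, Or.inl rfl⟩,
        a, b, fl d + 1, fl2 d + 1, hab, by omega, Or.inl rfl, Or.inl rfl,
        Or.inr (Or.inr (Or.inr ⟨a - (fl d + 1), by omega, by omega, ?_, by omega, by omega⟩))⟩
      have e1 : b - (a - (fl d + 1)) = fl d + 1 + d := by omega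
      have e2 : a - (a - (fl d + 1)) = fl d + 1 := by omega
      rw [e1, e2, hb]
      have r1 : (fl d + 1 + d) / (fl d + 1) = 1 := Nat.div_eq_of_lt_le (by omega) (by omega)
      have r2 : (a + d) / a = 1 := Nat.div_eq_of_lt_le (by omega) (by omega)
      rw [r1, r2]
end

section
/- For each nonnegative integer k, let {(aₙ, bₙ)}ₙ≥0 enumerate (with aₙ ≤ bₙ and a₀ < a₁ < a₂ < ⋯) all positions of F-Wythoff with Sprague-Grundy value k. Then {aₙ : n ≥ 0} ∪ {bₙ : n ≥ 0} = ℤ≥0, and the intersection {aₙ : n ≥ 0} ∩ {bₙ : n ≥ 0} has at most 2 elements. -/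
set_option linter.unnecessarySeqFocus false

theorem grundy_eq (p : ℕ × ℕ) : grundy p = sInf {g : ℕ | ∀ q, FMove p q → grundy q ≠ g} := by
  rw [grundy]

/-- the option set only depends on the unordered pair -/
theorem fMove_swap (x y : ℕ) (q : ℕ × ℕ) : FMove (x, y) q ↔ FMove (y, x) q := by
  constructor <;>
  · rintro ⟨a, b, u, v, hab, huv, hp, hq, hc⟩
    refine ⟨a, b, u, v, hab, huv, ?_, hq, hc⟩
    rcases hp with h | h <;> [right; left] <;>
      (simp only [Prod.mk.injEq] at h ⊢; omega)

theorem grundy_swap (x y : ℕ) : grundy (x, y) = grundy (y, x) := by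
  rw [grundy_eq, grundy_eq]
  congr 1
  ext g
  simp only [Set.mem_setOf_eq]
  exact ⟨fun h q hm => h q ((fMove_swap x y q).2 hm), fun h q hm => h q ((fMove_swap x y q).1 hm)⟩

/-- grundy value is bounded by the coordinate sum -/
theorem grundy_le_sum (p : ℕ × ℕ) : grundy p ≤ p.1 + p.2 := by
  rw [grundy_eq]
  apply Nat.sInf_le
  intro q hm
  have := fMove_lt hm
  have := grundy_le_sum q
  omega
termination_by p.1 + p.2
decreasing_by exact fMove_lt (by assumption)

/-- a position's value differs from all its options' values -/
theorem grundy_ne_option {p q : ℕ × ℕ} (h : FMove p q) : grundy q ≠ grundy p := by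
  have hmem : grundy p ∈ {g : ℕ | ∀ q, FMove p q → grundy q ≠ g} := by
    rw [grundy_eq]
    apply Nat.sInf_mem
    refine ⟨p.1 + p.2, fun q hm => ?_⟩
    have := fMove_lt hm
    have := grundy_le_sum q
    omega
  exact hmem q h

theorem grundy_le_of {p : ℕ × ℕ} {g : ℕ} (h : ∀ q, FMove p q → grundy q ≠ g) :
    grundy p ≤ g := by
  rw [grundy_eq]; exact Nat.sInf_le h
/-- decrease the larger coordinate, staying at least the smaller -/
theorem move_row {m v v' : ℕ} (h1 : m ≤ v') (h2 : v' < v) : FMove (m, v) (m, v') :=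
  ⟨m, v, m, v', le_trans h1 (le_of_lt h2), h1, Or.inl rfl, Or.inl rfl, Or.inl ⟨rfl, h2⟩⟩

/-- decrease the smaller coordinate -/
theorem move_small {u u' v : ℕ} (h1 : u' < u) (h2 : u ≤ v) : FMove (u, v) (u', v) :=
  ⟨u, v, u', v, h2, le_trans (le_of_lt h1) h2, Or.inl rfl, Or.inl rfl,
    Or.inr (Or.inl ⟨h1, rfl⟩)⟩

/-- decrease the larger coordinate below the smaller -/
theorem move_under {u u' v : ℕ} (h1 : u' < u) (h2 : u ≤ v) : FMove (u, v) (u', u) :=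
  ⟨u, v, u', u, h2, le_of_lt h1, Or.inl rfl, Or.inl rfl, Or.inr (Or.inr (Or.inl ⟨h1, rfl⟩))⟩

/-- diagonal move between diagonal positions -/
theorem move_diag {t s : ℕ} (h1 : 1 ≤ t) (h2 : t < s) : FMove (s, s) (t, t) := by
  refine ⟨s, s, t, t, le_refl s, le_refl t, Or.inl rfl, Or.inl rfl,
    Or.inr (Or.inr (Or.inr ⟨s - t, by omega, by omega, ?_, by omega, by omega⟩))⟩
  have h3 : s - (s - t) = t := by omega
  rw [h3, Nat.div_self (by omega), Nat.div_self (by omega)]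

/-- classification of options of an ordered position -/
theorem fmove_cases {m y : ℕ} (hmy : m ≤ y) {q : ℕ × ℕ} (h : FMove (m, y) q) :
    ∃ u v, u ≤ v ∧ grundy q = grundy (u, v) ∧
      ((u = m ∧ m ≤ v ∧ v < y) ∨ (u < m ∧ v = y) ∨ (u < m ∧ v = m) ∨
        (∃ j, 1 ≤ j ∧ j < m ∧ u = m - j ∧ v = y - j)) := by
  obtain ⟨a, b, x, y0, hab, hxy0, hp, hq, hc⟩ := h
  have ham : a = m ∧ b = y := by
    rcases hp with e | e <;> (simp only [Prod.mk.injEq] at e; omega)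
  refine ⟨x, y0, hxy0, ?_, ?_⟩
  · rcases hq with e | e <;> subst e
    · rfl
    · exact (grundy_swap x y0).symm
  · rcases hc with ⟨h1, h2⟩ | ⟨h1, h2⟩ | ⟨h1, h2⟩ | ⟨j, hj1, hj2, _, h1, h2⟩
    · exact Or.inl ⟨by omega, by omega, by omega⟩
    · exact Or.inr (Or.inl ⟨by omega, by omega⟩)
    · exact Or.inr (Or.inr (Or.inl ⟨by omega, by omega⟩))
    · exact Or.inr (Or.inr (Or.inr ⟨j, by omega, by omega, by omega, by omega⟩))

/-- two positions with the same Grundy value sharing a line coincide -/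
theorem eq_of_same_line {x y x' y' : ℕ} (hxy : x ≤ y) (hxy' : x' ≤ y')
    (hg : grundy (x, y) = grundy (x', y'))
    (hshare : x = x' ∨ x = y' ∨ y = x' ∨ y = y') : x = x' ∧ y = y' := by
  by_contra hne
  have key : FMove (x, y) (x', y') ∨ FMove (x', y') (x, y) := by
    rcases hshare with h | h | h | h
    · -- same smaller coordinate
      subst h
      have hyy : y ≠ y' := fun e => hne ⟨rfl, e⟩
      rcases Nat.lt_or_ge y y' with hlt | hge
      · exact Or.inr (move_row hxy hlt)
      · exact Or.inl (move_row hxy' (by omega))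
    · -- x = y' : positions (x, y) and (x', x)
      subst h
      rcases Nat.lt_or_ge x' x with hlt | hge
      · exact Or.inl (move_under hlt hxy)
      · -- x ≤ x' ≤ y' = x so x' = x = y'
        have hx : x' = x := by omega
        subst hx
        have hyx : x' < y := by omega
        exact Or.inl (move_row (le_refl x') hyx)
    · -- y = x' : positions (x, y) and (y, y')
      subst h
      rcases Nat.lt_or_ge x y with hlt | hge
      · exact Or.inr (move_under hlt hxy')
      · have hx : x = y := by omega
        subst hx
        have : x < y' := by omega
        exact Or.inr (move_row (le_refl x) this)
    · -- same larger coordinate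
      subst h
      have hxx : x ≠ x' := fun e => hne ⟨e, rfl⟩
      rcases Nat.lt_or_ge x x' with hlt | hge
      · exact Or.inr (move_small hlt hxy')
      · exact Or.inl (move_small (by omega) hxy)
  rcases key with mv | mv
  · exact grundy_ne_option mv hg.symm
  · exact grundy_ne_option mv hg
/-- every line contains a position of each Grundy value -/
theorem line_exists (k m : ℕ) : ∃ u v, u ≤ v ∧ grundy (u, v) = k ∧ (u = m ∨ v = m) := by
  by_contra hcon
  push_neg at hcon
  -- hcon : ∀ u v, u ≤ v → grundy (u, v) = k → u ≠ m ∧ v ≠ m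
  set P : Set (ℕ × ℕ) := {p | p.1 ≤ p.2 ∧ grundy p = k ∧ p.1 < m} with hP
  have hinj : Set.InjOn Prod.fst P := by
    rintro ⟨u, v⟩ ⟨hu1, hu2, hu3⟩ ⟨u', v'⟩ ⟨hv1, hv2, hv3⟩ he
    simp only at he hu2 hv2
    have := eq_of_same_line hu1 hv1 (hu2.trans hv2.symm) (Or.inl he)
    simp [Prod.ext_iff]
    exact this
  have himg : (Prod.fst '' P).Finite := by
    apply (Set.finite_Iio m).subset
    rintro _ ⟨p, hp, rfl⟩
    exact hp.2.2
  have hPfin : P.Finite := Set.Finite.of_finite_image himg hinj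
  obtain ⟨M, hM⟩ := (hPfin.image Prod.snd).bddAbove
  have hMb : ∀ p ∈ P, p.2 ≤ M := fun p hp => hM (Set.mem_image_of_mem _ hp)
  -- all far-out positions in row m have small grundy value
  have hsmall : ∀ v, M + m < v → grundy (m, v) ≤ k := by
    intro v hv
    apply grundy_le_of
    intro q hq hk
    have hmv : m ≤ v := by omega
    obtain ⟨u, w, huw, hg, hc⟩ := fmove_cases hmv hq
    rw [hg] at hk
    rcases hc with ⟨h1, h2, h3⟩ | ⟨h1, h2⟩ | ⟨h1, h2⟩ | ⟨j, hj1, hj2, h1, h2⟩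
    · exact (hcon u w huw hk).1 h1
    · have : (u, w) ∈ P := ⟨huw, hk, h1⟩
      have := hMb _ this
      simp only at this
      omega
    · exact (hcon u w huw hk).2 h2
    · have h1' : u < m := by omega
      have : (u, w) ∈ P := ⟨huw, hk, h1'⟩
      have := hMb _ this
      simp only at this
      omega
  -- pigeonhole: k+2 distinct values all ≤ k
  have hinjrow : Function.Injective (fun i : Fin (k + 2) => grundy (m, M + m + 1 + i)) := by
    intro i j he
    simp only at he
    have h1 : m ≤ M + m + 1 + (i : ℕ) := by omega
    have h2 : m ≤ M + m + 1 + (j : ℕ) := by omega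
    have := eq_of_same_line h1 h2 he (Or.inl rfl)
    have : M + m + 1 + (i : ℕ) = M + m + 1 + (j : ℕ) := this.2
    exact Fin.ext (by omega)
  have hlt : ∀ i : Fin (k + 2), grundy (m, M + m + 1 + i) < k + 1 := by
    intro i
    have := hsmall (M + m + 1 + i) (by omega)
    omega
  have : Function.Injective (fun i : Fin (k + 2) => (⟨grundy (m, M + m + 1 + i), hlt i⟩ : Fin (k + 1))) := by
    intro i j he
    apply hinjrow
    simpa [Fin.ext_iff] using he
  have := Fintype.card_le_of_injective _ this
  simp at this
theorem stmt18 (k : ℕ) (a b : ℕ → ℕ)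
    (hord : ∀ n, a n ≤ b n)
    (hmono : StrictMono a)
    (hval : ∀ n, grundy (a n, b n) = k)
    (hall : ∀ x y : ℕ, x ≤ y → grundy (x, y) = k → ∃ n, (x, y) = (a n, b n)) :
    (Set.range a ∪ Set.range b = Set.univ) ∧
    (Set.range a ∩ Set.range b).encard ≤ 2 := by
  constructor
  · -- union: every m lies on some enumerated position
    ext m
    simp only [Set.mem_union, Set.mem_range, Set.mem_univ, iff_true]
    obtain ⟨u, v, huv, hg, hm⟩ := line_exists k m
    obtain ⟨n, hn⟩ := hall u v huv hg
    simp only [Prod.mk.injEq] at hn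
    rcases hm with hm | hm
    · exact Or.inl ⟨n, by omega⟩
    · exact Or.inr ⟨n, by omega⟩
  · -- intersection is contained in the diagonal k-positions
    have hsub : Set.range a ∩ Set.range b ⊆ {m | grundy (m, m) = k} := by
      rintro m ⟨⟨i, hi⟩, ⟨j, hj⟩⟩
      have hgi : grundy (m, b i) = k := by rw [← hi]; exact hval i
      have hgj : grundy (a j, m) = k := by rw [← hj]; exact hval j
      have h1 : a j ≤ m := by rw [← hj]; exact hord j
      have h2 : m ≤ b i := by rw [← hi]; exact hord i
      have := eq_of_same_line h1 h2 (hgj.trans hgi.symm)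
        (Or.inr (Or.inr (Or.inl rfl)))
      have haj : a j = m := this.1
      simp only [Set.mem_setOf_eq]
      have h3 := hval j
      rw [haj, hj] at h3
      exact h3
    refine le_trans (Set.encard_mono hsub) ?_
    -- the diagonal contains at most two positions of value k
    by_cases hd : ∃ d, 0 < d ∧ grundy (d, d) = k
    · obtain ⟨d, hd1, hd2⟩ := hd
      have hsub2 : {m | grundy (m, m) = k} ⊆ insert 0 {d} := by
        intro m hm
        simp only [Set.mem_setOf_eq] at hm
        simp only [Set.mem_insert_iff, Set.mem_singleton_iff]
        by_contra hc
        push_neg at hc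
        obtain ⟨hm0, hmd⟩ := hc
        have hm1 : 0 < m := Nat.pos_of_ne_zero hm0
        rcases Nat.lt_or_ge m d with hlt | hge
        · exact grundy_ne_option (move_diag hm1 hlt) (hm.trans hd2.symm)
        · have : d < m := by omega
          exact grundy_ne_option (move_diag hd1 this) (hd2.trans hm.symm)
      calc ({m | grundy (m, m) = k} : Set ℕ).encard ≤ (insert 0 {d} : Set ℕ).encard :=
              Set.encard_mono hsub2
        _ ≤ ({d} : Set ℕ).encard + 1 := Set.encard_insert_le _ _
        _ = 2 := by rw [Set.encard_singleton]; rfl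
    · push_neg at hd
      have hsub2 : {m | grundy (m, m) = k} ⊆ ({0} : Set ℕ) := by
        intro m hm
        simp only [Set.mem_setOf_eq] at hm
        simp only [Set.mem_singleton_iff]
        by_contra hc
        exact hd m (Nat.pos_of_ne_zero hc) hm
      calc ({m | grundy (m, m) = k} : Set ℕ).encard ≤ ({0} : Set ℕ).encard :=
              Set.encard_mono hsub2
        _ ≤ 2 := by rw [Set.encard_singleton]; exact one_le_two
end
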